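/- Cross-path exclusion: Let P1 = (v1 = u, ..., v_m = root) and P2 = (w1 = u, ..., w_n = root) be two internally vertex-disjoint paths from u to root. If there is a path P3 from v_i ∈ P1 to w_j ∈ P2 whose only common vertices with P1 ∪ P2 are v_i and w_j, then for all k with i < k ≤ m and all l with 1 ≤ l < j, the pair {v_k, w_l} is not a double-vertex dominator of u. -/

import Mathlib

/-- A nonempty directed path `p` from `a` to `b` in the graph with edge relation `E`. -/
def IsPath {V : Type*} (E : V → V → Prop) (p : List V) (a b : V) : Prop :=
  p ≠ [] ∧ p.head? = some a ∧ p.getLast? = some b ∧ p.Chain' E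

/-- `A` dominates `B` with respect to `root`: every path from a vertex of `B` to `root`
contains a vertex of `A`. -/
def Dominates {V : Type*} (E : V → V → Prop) (root : V) (A B : Set V) : Prop :=
  ∀ b ∈ B, ∀ p : List V, IsPath E p b root → ∃ a ∈ A, a ∈ p

/-- `A` is a dominator of `B`: it dominates `B` and no proper subset `A \ {v}` does. -/
def IsDominator {V : Type*} (E : V → V → Prop) (root : V) (A B : Set V) : Prop :=
  Dominates E root A B ∧ ∀ v ∈ A, ¬ Dominates E root (A \ {v}) B

/-- `{v, w}` is a double-vertex dominator of `u`. -/
def DoubleDom {V : Type*} (E : V → V → Prop) (root : V) (u v w : V) : Prop :=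
  v ≠ w ∧ Dominates E root {v, w} {u} ∧
    ¬ Dominates E root {v} {u} ∧ ¬ Dominates E root {w} {u}

/-- The edge relation `E` is acyclic. -/
def Acyclic {V : Type*} (E : V → V → Prop) : Prop :=
  ∀ a b, E a b → ¬ Relation.ReflTransGen E b a

private lemma chain_rtg {V : Type*} {E : V → V → Prop} :
    ∀ {l : List V} {a : V}, List.Chain E a l → ∀ x ∈ l, Relation.ReflTransGen E a x := by
  intro l
  induction l with
  | nil => simp
  | cons b t ih =>
    intro a h x hx
    rw [List.Chain, List.chain_cons] at h
    rcases List.mem_cons.1 hx with rfl | hx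
    · exact Relation.ReflTransGen.single h.1
    · exact Relation.ReflTransGen.head h.1 (ih h.2 x hx)

private lemma nodup_of_chain' {V : Type*} {E : V → V → Prop} (hacyc : Acyclic E) :
    ∀ {p : List V}, List.Chain' E p → p.Nodup := by
  intro p
  induction p with
  | nil => simp
  | cons a t ih =>
    intro h
    refine List.nodup_cons.2 ⟨?_, ih h.tail⟩
    intro ha
    cases t with
    | nil => simp at ha
    | cons b t' =>
      have hc : List.Chain E a (b :: t') := h
      have hE : E a b := (List.chain_cons.1 hc).1
      have hrtg : Relation.ReflTransGen E b a := by
        rcases List.mem_cons.1 ha with rfl | ha'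
        · exact Relation.ReflTransGen.refl
        · exact chain_rtg (List.chain_cons.1 hc).2 a ha'
      exact hacyc a b hE hrtg

theorem cross_path_exclusion {V : Type*} [Fintype V] (E : V → V → Prop) (root : V)
    (hacyc : Acyclic E) (u : V) (p₁ p₂ : List V)
    (h₁ : IsPath E p₁ u root) (h₂ : IsPath E p₂ u root)
    (hdisj : ∀ x, x ∈ p₁ → x ∈ p₂ → x = u ∨ x = root)
    (i : Fin p₁.length) (j : Fin p₂.length) (p₃ : List V)
    (h₃ : IsPath E p₃ (p₁.get i) (p₂.get j))
    (h₃disj : ∀ x ∈ p₃, (x ∈ p₁ ∨ x ∈ p₂) → x = p₁.get i ∨ x = p₂.get j) :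
    ∀ (k : Fin p₁.length) (l : Fin p₂.length), i < k → l < j →
      ¬ DoubleDom E root u (p₁.get k) (p₂.get l) := by
  intro k l hik hlj hdd
  obtain ⟨hne, hdom, hnv, hnw⟩ := hdd
  obtain ⟨hp1ne, hp1h, hp1l, hp1c⟩ := h₁
  obtain ⟨hp2ne, hp2h, hp2l, hp2c⟩ := h₂
  obtain ⟨hp3ne, hp3h, hp3l, hp3c⟩ := h₃
  -- dispatch the cases where the dominator candidates are u or root
  by_cases hvu : p₁.get k = u
  · exact hnv fun b hb q hq => ⟨_, rfl, by
      rw [hvu]; rw [Set.mem_singleton_iff] at hb; subst hb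
      exact List.mem_of_mem_head? (by simp [hq.2.1])⟩
  by_cases hvr : p₁.get k = root
  · exact hnv fun b hb q hq => ⟨_, rfl, by
      rw [hvr]; exact List.mem_of_mem_getLast? (by simp [hq.2.2.1])⟩
  by_cases hwu : p₂.get l = u
  · exact hnw fun b hb q hq => ⟨_, rfl, by
      rw [hwu]; rw [Set.mem_singleton_iff] at hb; subst hb
      exact List.mem_of_mem_head? (by simp [hq.2.1])⟩
  by_cases hwr : p₂.get l = root
  · exact hnw fun b hb q hq => ⟨_, rfl, by
      rw [hwr]; exact List.mem_of_mem_getLast? (by simp [hq.2.2.1])⟩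
  -- nodup facts
  have hn1 : p₁.Nodup := nodup_of_chain' hacyc hp1c
  have hn2 : p₂.Nodup := nodup_of_chain' hacyc hp2c
  have hinj1 : Function.Injective p₁.get := List.nodup_iff_injective_get.1 hn1
  have hinj2 : Function.Injective p₂.get := List.nodup_iff_injective_get.1 hn2
  -- the dominator candidates are not on the other path
  have hvk_p2 : p₁.get k ∉ p₂ := fun h =>
    (hdisj _ (List.get_mem _ _) h).elim hvu hvr
  have hwl_p1 : p₂.get l ∉ p₁ := fun h =>
    (hdisj _ h (List.get_mem _ _)).elim hwu hwr
  -- the bypass path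
  obtain ⟨A, hA⟩ : ∃ A : List V, A = p₁.take (i.val + 1) := ⟨_, rfl⟩
  obtain ⟨B, hB⟩ : ∃ B : List V, B = p₃.tail := ⟨_, rfl⟩
  obtain ⟨C, hC⟩ : ∃ C : List V, C = p₂.drop (j.val + 1) := ⟨_, rfl⟩
  have hAlen : A.length = i.val + 1 := by
    rw [hA, List.length_take]
    have := i.isLt
    omega
  have hAget : ∀ (m : ℕ) (h : m < A.length), A[m] = p₁[m]'(by
      have := i.isLt; rw [hAlen] at h; omega) := by
    intro m h
    simp [hA, List.getElem_take]
  have hAhead : A.head? = some u := by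
    rw [List.head?_eq_getElem?, List.getElem?_eq_getElem (by rw [hAlen]; omega), hAget]
    rw [List.head?_eq_getElem?] at hp1h
    rwa [List.getElem?_eq_getElem (by have := i.isLt; omega)] at hp1h
  have hAlast : A.getLast? = some (p₁.get i) := by
    rw [List.getLast?_eq_getElem?, hAlen]
    simp only [Nat.add_sub_cancel]
    rw [List.getElem?_eq_getElem (by rw [hAlen]; omega), hAget]
    simp [List.get_eq_getElem]
  have hAne : A ≠ [] := by
    intro h
    have := congrArg List.length h
    rw [hAlen] at this
    simp at this
  -- facts about p₃
  have hp3cons : p₃ = p₁.get i :: B := by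
    cases p₃ with
    | nil => exact absurd rfl hp3ne
    | cons x t => simp_all [hB]
  have hBlast_nil : B = [] → p₁.get i = p₂.get j := by
    intro hBnil
    rw [hp3cons, hBnil] at hp3l
    simpa using hp3l
  have hBlast : B ≠ [] → B.getLast? = some (p₂.get j) := by
    intro hBne
    cases hBcase : B with
    | nil => exact absurd hBcase hBne
    | cons y t =>
      rw [hp3cons, hBcase, List.getLast?_cons_cons] at hp3l
      exact hp3l
  have hBchain : B ≠ [] → ∀ y ∈ B.head?, E (p₁.get i) y := by
    intro hBne y hy
    cases hBcase : B with
    | nil => exact absurd hBcase hBne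
    | cons b t =>
      have hyb : y = b := by rw [hBcase] at hy; exact (by simpa using hy : b = y).symm
      have hch : List.Chain E (p₁.get i) (b :: t) := by
        rw [hp3cons, hBcase] at hp3c; exact hp3c
      rw [hyb]
      exact (List.chain_cons.1 hch).1
  -- root is the last entry of p₂
  have hrootlast2 : p₂[p₂.length - 1]'(by have := j.isLt; omega) = root := by
    rw [List.getLast?_eq_getElem?] at hp2l
    rwa [List.getElem?_eq_getElem (by have := j.isLt; omega), Option.some_inj] at hp2l
  have hClen : C.length = p₂.length - (j.val + 1) := by simp [hC]
  have hClen' : C ≠ [] → j.val + 1 < p₂.length := by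
    intro h
    have := List.length_pos_iff.2 h
    rw [hClen] at this; omega
  have hCget : ∀ (m : ℕ) (h : m < C.length), C[m] = p₂[j.val + 1 + m]'(by
      rw [hClen] at h; omega) := by
    intro m h
    simp [hC, List.getElem_drop]
  have hClast : C ≠ [] → C.getLast? = some root := by
    intro hCne
    have hCpos : 0 < C.length := List.length_pos_iff.2 hCne
    rw [List.getLast?_eq_getElem?, List.getElem?_eq_getElem (by omega), hCget]
    rw [Option.some_inj, ← hrootlast2]
    congr 1
    rw [hClen]
    have := j.isLt
    have := hClen' hCne
    omega
  have hChead : ∀ (h : j.val + 1 < p₂.length), C.head? = some (p₂[j.val + 1]'h) := by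
    intro h
    rw [hC, List.head?_drop, List.getElem?_eq_getElem]
  have hCnil : C = [] → p₂.get j = root := by
    intro hCnil
    have h0 : p₂.length - (j.val + 1) = 0 := by rw [← hClen, hCnil]; rfl
    rw [← hrootlast2]
    simp only [List.get_eq_getElem]
    congr 1
    have := j.isLt
    omega
  -- the edge j → j+1 in p₂
  have hE2 : ∀ (h : j.val + 1 < p₂.length), E (p₂.get j) (p₂[j.val + 1]) := by
    intro h
    have := List.isChain_iff_getElem.1 hp2c j.val (by omega)
    simpa [List.get_eq_getElem] using this
  have hAchain : A.Chain' E := by rw [hA]; exact hp1c.take _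
  have hBchain' : B.Chain' E := by rw [hB]; exact hp3c.tail
  have hCchain : C.Chain' E := by rw [hC]; exact hp2c.drop _
  have hAsub : A ⊆ p₁ := by rw [hA]; exact List.take_subset _ _
  have hBsub : B ⊆ p₃ := by rw [hB]; exact fun x => List.mem_of_mem_tail
  have hCsub : C ⊆ p₂ := by rw [hC]; exact List.drop_subset _ _
  -- Q is the bypass path
  set Q : List V := A ++ (B ++ C) with hQ
  have hQhead : Q.head? = some u := by
    rw [hQ, List.head?_append, hAhead]; rfl
  have hQlast : Q.getLast? = some root := by
    rw [hQ, List.getLast?_append, List.getLast?_append]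
    rcases eq_or_ne C [] with hCe | hCne
    · have hjr := hCnil hCe
      rcases eq_or_ne B [] with hBe | hBne
      · subst hBe; subst hCe
        simp only [List.getLast?_nil, Option.or_none, Option.none_or, hAlast]
        rw [Option.some_inj]
        exact (hBlast_nil rfl).trans hjr
      · subst hCe
        simp only [List.getLast?_nil, Option.or_none, Option.none_or, hBlast hBne]
        show Option.some (p₂.get j) = some root
        exact congrArg some hjr
    · simp [hClast hCne]
  have hQchain : Q.Chain' E := by
    rw [hQ, List.Chain', List.isChain_append, List.isChain_append]
    refine ⟨hAchain, ⟨hBchain', hCchain, ?_⟩, ?_⟩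
    · -- link B → C
      intro x hx y hy
      have hBne : B ≠ [] := by intro h; subst h; simp at hx
      have hCne : C ≠ [] := by intro h; subst h; simp at hy
      have hlt := hClen' hCne
      have hx' : x = p₂.get j := by rw [hBlast hBne] at hx; exact (by simpa using hx : p₂.get j = x).symm
      have hy' : y = p₂[j.val + 1] := by rw [hChead hlt] at hy; exact (by simpa using hy : p₂[j.val + 1]'hlt = y).symm
      rw [hx', hy']
      exact hE2 hlt
    · -- link A → (B ++ C)
      intro x hx y hy
      have hx' : x = p₁.get i := by rw [hAlast] at hx; exact (by simpa using hx : p₁.get i = x).symm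
      subst hx'
      rw [List.head?_append] at hy
      rcases eq_or_ne B [] with hBe | hBne
      · subst hBe
        simp only [List.head?_nil, Option.none_or] at hy
        have hCne : C ≠ [] := by intro h; subst h; simp at hy
        have hlt := hClen' hCne
        have hy' : y = p₂[j.val + 1] := by rw [hChead hlt] at hy; exact (by simpa using hy : p₂[j.val + 1]'hlt = y).symm
        rw [hBlast_nil rfl, hy']
        exact hE2 hlt
      · have : B.head?.or C.head? = B.head? := by
          cases hBcase : B with
          | nil => exact absurd hBcase hBne
          | cons b t => rfl
        rw [this] at hy
        exact hBchain hBne y hy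
  have hQne : Q ≠ [] := by
    rw [hQ]
    intro h
    exact hAne (List.append_eq_nil_iff.1 h).1
  -- exclusions
  have hvkA : p₁.get k ∉ A := by
    intro h
    obtain ⟨m, hm, hmeq⟩ := List.mem_iff_getElem.1 h
    rw [hAget m hm] at hmeq
    have heq : (⟨m, by have := i.isLt; rw [hAlen] at hm; omega⟩ : Fin p₁.length) = k := by
      apply hinj1; simpa [List.get_eq_getElem] using hmeq
    have hmk : m = k.val := congrArg Fin.val heq
    rw [hAlen] at hm
    have : i.val < k.val := hik
    omega
  have hvkB : p₁.get k ∉ B := by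
    intro h
    have h3 : p₁.get k ∈ p₃ := hBsub h
    rcases h₃disj _ h3 (Or.inl (List.get_mem _ _)) with heq | heq
    · have : k = i := hinj1 heq
      rw [this] at hik; exact lt_irrefl _ hik
    · exact hvk_p2 (heq ▸ List.get_mem _ _)
  have hvkC : p₁.get k ∉ C := fun h => hvk_p2 (hCsub h)
  have hwlA : p₂.get l ∉ A := fun h => hwl_p1 (hAsub h)
  have hwlB : p₂.get l ∉ B := by
    intro h
    have h3 : p₂.get l ∈ p₃ := hBsub h
    rcases h₃disj _ h3 (Or.inr (List.get_mem _ _)) with heq | heq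
    · exact hwl_p1 (heq ▸ List.get_mem _ _)
    · have : l = j := hinj2 heq
      rw [this] at hlj; exact lt_irrefl _ hlj
  have hwlC : p₂.get l ∉ C := by
    intro h
    obtain ⟨m, hm, hmeq⟩ := List.mem_iff_getElem.1 h
    rw [hCget m hm] at hmeq
    have heq : (⟨j.val + 1 + m, by rw [hClen] at hm; omega⟩ : Fin p₂.length) = l := by
      apply hinj2; simpa [List.get_eq_getElem] using hmeq
    have hml : j.val + 1 + m = l.val := congrArg Fin.val heq
    have : l.val < j.val := hlj
    omega
  -- derive the contradiction
  obtain ⟨a, ha, haQ⟩ := hdom u rfl Q ⟨hQne, hQhead, hQlast, hQchain⟩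
  rw [hQ] at haQ
  simp only [List.mem_append] at haQ
  rcases ha with rfl | rfl
  · rcases haQ with h | h | h
    exacts [hvkA h, hvkB h, hvkC h]
  · rcases haQ with h | h | h
    exacts [hwlA h, hwlB h, hwlC h]
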